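/- Let G be a semigroup and let G₁, G₂ be two subsemigroups of G such that every element a of G can be decomposed uniquely as a = a₁a₂ with a₁ ∈ G₁ and a₂ ∈ G₂. Define B₁(a) = a₁ and B₂(a) = a₂. Then (G, B₁, B₂) is a Rota-Baxter system of semigroups. -/
import Mathlib

theorem stmt_1 {G : Type*} [Semigroup G] (G₁ G₂ : Subsemigroup G) (B₁ B₂ : G → G)
    (hmem : ∀ a : G, B₁ a ∈ G₁ ∧ B₂ a ∈ G₂ ∧ a = B₁ a * B₂ a)
    (huniq : ∀ (a x y : G), x ∈ G₁ → y ∈ G₂ → a = x * y → x = B₁ a ∧ y = B₂ a) :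
    (∀ a b : G, B₁ a * B₁ b = B₁ (B₁ a * b * B₂ a)) ∧
    (∀ a b : G, B₂ b * B₂ a = B₂ (B₁ a * b * B₂ a)) := by
  have key : ∀ a b : G, B₁ a * B₁ b = B₁ (B₁ a * b * B₂ a) ∧
      B₂ b * B₂ a = B₂ (B₁ a * b * B₂ a) := by
    intro a b
    apply huniq
    · exact G₁.mul_mem (hmem a).1 (hmem b).1
    · exact G₂.mul_mem (hmem b).2.1 (hmem a).2.1
    · conv_lhs => rw [(hmem b).2.2]
      simp only [mul_assoc]
  exact ⟨fun a b => (key a b).1, fun a b => (key a b).2⟩
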